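/- The Borwein cubic AGM identity: for 0 < k ≤ 1, AG₃(1,k) = 1 / ₂F₁(1/3, 2/3; 1; 1−k³), where AG₃ is the cubic analogue of the arithmetic-geometric mean. -/

import Mathlib

noncomputable def cc (n : ℕ) : ℝ :=
  (ascPochhammer ℝ n).eval (1/3) * (ascPochhammer ℝ n).eval (2/3) /
    ((ascPochhammer ℝ n).eval 1 * n.factorial)

lemma asc_pos {x : ℝ} (hx : 0 < x) (n : ℕ) : 0 < (ascPochhammer ℝ n).eval x := by
  induction n with
  | zero => simp
  | succ n ih =>
    rw [ascPochhammer_succ_eval]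
    positivity

lemma asc_le_fact {x : ℝ} (hx0 : 0 < x) (hx : x ≤ 1) (n : ℕ) :
    (ascPochhammer ℝ n).eval x ≤ n.factorial := by
  induction n with
  | zero => simp
  | succ n ih =>
    rw [ascPochhammer_succ_eval, Nat.factorial_succ]
    push_cast
    have h1 : (0:ℝ) < (ascPochhammer ℝ n).eval x := asc_pos hx0 n
    have h2 : x + n ≤ 1 + n := by linarith
    have h5 : (0:ℝ) < n.factorial := by exact_mod_cast Nat.factorial_pos n
    nlinarith

lemma cc_zero : cc 0 = 1 := by simp [cc]

lemma cc_pos (n : ℕ) : 0 < cc n := by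
  have h1 := asc_pos (by norm_num : (0:ℝ) < 1/3) n
  have h2 := asc_pos (by norm_num : (0:ℝ) < 2/3) n
  have h3 := asc_pos (by norm_num : (0:ℝ) < 1) n
  have h4 : (0:ℝ) < n.factorial := by exact_mod_cast Nat.factorial_pos n
  exact div_pos (mul_pos h1 h2) (mul_pos h3 h4)

lemma cc_le_one (n : ℕ) : cc n ≤ 1 := by
  have h1 := asc_le_fact (by norm_num : (0:ℝ) < 1/3) (by norm_num) n
  have h2 := asc_le_fact (by norm_num : (0:ℝ) < 2/3) (by norm_num) n
  have h3 : ((ascPochhammer ℝ n).eval (1:ℝ)) = n.factorial := ascPochhammer_eval_one ℝ n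
  have h4 : (0:ℝ) < n.factorial := by exact_mod_cast Nat.factorial_pos n
  have h5 := asc_pos (by norm_num : (0:ℝ) < 1/3) n
  have h6 := asc_pos (by norm_num : (0:ℝ) < 2/3) n
  rw [cc, h3, div_le_one (by positivity)]
  nlinarith

lemma cc_rec (n : ℕ) : 9 * ((n:ℝ)+1)^2 * cc (n+1) = (3*n+1) * (3*n+2) * cc n := by
  have h3 : ((ascPochhammer ℝ n).eval (1:ℝ)) = n.factorial := ascPochhammer_eval_one ℝ n
  have h3' : ((ascPochhammer ℝ (n+1)).eval (1:ℝ)) = (n+1).factorial := ascPochhammer_eval_one ℝ (n+1)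
  have h4 : (0:ℝ) < n.factorial := by exact_mod_cast Nat.factorial_pos n
  rw [cc, cc, ascPochhammer_succ_eval, ascPochhammer_succ_eval, h3, h3', Nat.factorial_succ]
  push_cast
  field_simp
  ring

/-- Gauss hypergeometric function ₂F₁(a,b;c;z) as a power series sum. -/
noncomputable def hyp2F1 (a b c z : ℝ) : ℝ :=
  ∑' n : ℕ, (ascPochhammer ℝ n).eval a * (ascPochhammer ℝ n).eval b /
    ((ascPochhammer ℝ n).eval c * n.factorial) * z ^ n

noncomputable def FF (z : ℝ) : ℝ := ∑' n : ℕ, cc n * z ^ n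
noncomputable def GG (z : ℝ) : ℝ := ∑' n : ℕ, ((n:ℝ)+1) * cc (n+1) * z ^ n
noncomputable def HH (z : ℝ) : ℝ := ∑' n : ℕ, ((n:ℝ)+2) * ((n:ℝ)+1) * cc (n+2) * z ^ n

lemma cc_abs (n : ℕ) : |cc n| ≤ 1 := by
  rw [abs_of_pos (cc_pos n)]; exact cc_le_one n

lemma summable_aux (p : ℕ → ℝ) (C : ℝ) (hp : ∀ n, |p n| ≤ C * ((n:ℝ)+1)^2)
    {z : ℝ} (hz : |z| < 1) : Summable (fun n => p n * z ^ n) := by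
  have hgeom : Summable (fun n : ℕ => C * (((n:ℝ)^2 + 2*n + 1) * |z| ^ n)) := by
    apply Summable.mul_left
    have h2 : Summable (fun n : ℕ => (n:ℝ)^2 * |z|^n) := by
      simpa using summable_pow_mul_geometric_of_norm_lt_one (R := ℝ) 2 (by simpa using hz)
    have h1 : Summable (fun n : ℕ => (n:ℝ) * |z|^n) := by
      simpa using summable_pow_mul_geometric_of_norm_lt_one (R := ℝ) 1 (by simpa using hz)
    have h0 : Summable (fun n : ℕ => |z|^n) := summable_geometric_of_lt_one (abs_nonneg z) hz
    have := (h2.add ((h1.mul_left 2).add h0))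
    apply this.congr
    intro n; ring
  apply Summable.of_norm_bounded hgeom
  intro n
  have h1 : ‖p n * z ^ n‖ = |p n| * |z|^n := by
    rw [norm_mul]; simp [abs_pow]
  rw [h1]
  have h2 : |p n| * |z|^n ≤ C * ((n:ℝ)+1)^2 * |z|^n := by
    apply mul_le_mul_of_nonneg_right (hp n) (by positivity)
  calc |p n| * |z|^n ≤ C * ((n:ℝ)+1)^2 * |z|^n := h2
    _ = C * (((n:ℝ)^2 + 2*n + 1) * |z| ^ n) := by ring

lemma summable_FF {z : ℝ} (hz : |z| < 1) : Summable (fun n : ℕ => cc n * z ^ n) :=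
  summable_aux _ 1 (fun n => by nlinarith [cc_abs n, Nat.cast_nonneg (α := ℝ) n]) hz

lemma summable_GG {z : ℝ} (hz : |z| < 1) : Summable (fun n : ℕ => ((n:ℝ)+1) * cc (n+1) * z ^ n) := by
  apply summable_aux _ 1 (fun n => ?_) hz
  have h := cc_abs (n+1)
  have hn : (0:ℝ) ≤ (n:ℝ)+1 := by positivity
  rw [abs_mul, abs_of_nonneg hn]
  nlinarith [abs_nonneg (cc (n+1)), Nat.cast_nonneg (α := ℝ) n]

lemma summable_HH {z : ℝ} (hz : |z| < 1) :
    Summable (fun n : ℕ => ((n:ℝ)+2) * ((n:ℝ)+1) * cc (n+2) * z ^ n) := by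
  apply summable_aux _ 2 (fun n => ?_) hz
  have h := cc_abs (n+2)
  have hn : (0:ℝ) ≤ ((n:ℝ)+2) * ((n:ℝ)+1) := by positivity
  rw [abs_mul, abs_of_nonneg hn]
  nlinarith [abs_nonneg (cc (n+2)), Nat.cast_nonneg (α := ℝ) n]

lemma summable_deriv_bound {r : ℝ} (hr0 : 0 < r) (hr : r < 1) :
    Summable (fun n : ℕ => (n:ℝ) * r^(n-1)) := by
  rw [← summable_nat_add_iff 1]
  have h1 : Summable (fun n : ℕ => (n:ℝ) * r^n) := by
    simpa using summable_pow_mul_geometric_of_norm_lt_one (R := ℝ) 1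
      (by rwa [Real.norm_eq_abs, abs_of_pos hr0])
  have h0 : Summable (fun n : ℕ => r^n) :=
    summable_geometric_of_lt_one hr0.le hr
  apply (h1.add h0).congr
  intro n
  simp only [Nat.add_sub_cancel]
  push_cast
  ring

lemma FF_hasDerivAt {z : ℝ} (hz : |z| < 1) : HasDerivAt FF (GG z) z := by
  set r : ℝ := (1 + |z|)/2 with hr_def
  have hr0 : 0 < r := by positivity
  have hr1 : r < 1 := by rw [hr_def]; linarith
  have hzr : |z| < r := by rw [hr_def]; linarith
  have hmem : z ∈ Metric.ball (0:ℝ) r := by simpa [Metric.mem_ball, Real.dist_eq] using hzr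
  have key : HasDerivAt (fun y => ∑' n : ℕ, cc n * y ^ n)
      (∑' n : ℕ, cc n * ((n:ℝ) * z ^ (n-1))) z := by
    apply hasDerivAt_tsum_of_isPreconnected (summable_deriv_bound hr0 hr1)
      Metric.isOpen_ball (convex_ball (0:ℝ) r).isPreconnected
      (g := fun n y => cc n * y ^ n) (g' := fun n y => cc n * ((n:ℝ) * y ^ (n-1)))
      (fun n y _ => (hasDerivAt_pow n y).const_mul (cc n)) ?_ (Metric.mem_ball_self hr0)
      ?_ hmem
    · intro n y hy
      have hy' : |y| < r := by simpa [Metric.mem_ball, Real.dist_eq] using hy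
      rw [Real.norm_eq_abs, abs_mul, abs_mul, abs_pow]
      have h1 : |cc n| * (|(n:ℝ)| * |y|^(n-1)) ≤ 1 * ((n:ℝ) * r^(n-1)) := by
        apply mul_le_mul (cc_abs n) ?_ (by positivity) (by norm_num)
        apply mul_le_mul (by simp) (pow_le_pow_left₀ (abs_nonneg y) hy'.le _) (by positivity)
          (by positivity)
      simpa using h1
    · apply (summable_FF (by simpa [abs_of_pos hr0] using hr1 : |(0:ℝ)| < 1)).congr
      intro n; rfl
  have heq : (∑' n : ℕ, cc n * ((n:ℝ) * z ^ (n-1))) = GG z := by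
    have hs : Summable (fun n : ℕ => cc n * ((n:ℝ) * z ^ (n-1))) := by
      rw [← summable_nat_add_iff 1]
      apply (summable_GG hz).congr
      intro n
      simp only [Nat.add_sub_cancel]
      push_cast
      ring
    rw [Summable.tsum_eq_zero_add hs]
    simp only [Nat.cast_zero, zero_mul, mul_zero, zero_add, cc_zero]
    rw [GG]
    apply tsum_congr
    intro n
    simp only [Nat.add_sub_cancel]
    push_cast
    ring
  rw [← heq]
  exact key

lemma summable_deriv_bound2 {r : ℝ} (hr0 : 0 < r) (hr : r < 1) :
    Summable (fun n : ℕ => ((n:ℝ)+1)^2 * r^(n-1)) := by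
  rw [← summable_nat_add_iff 1]
  have h2 : Summable (fun n : ℕ => (n:ℝ)^2 * r^n) := by
    simpa using summable_pow_mul_geometric_of_norm_lt_one (R := ℝ) 2
      (by rwa [Real.norm_eq_abs, abs_of_pos hr0])
  have h1 : Summable (fun n : ℕ => (n:ℝ) * r^n) := by
    simpa using summable_pow_mul_geometric_of_norm_lt_one (R := ℝ) 1
      (by rwa [Real.norm_eq_abs, abs_of_pos hr0])
  have h0 : Summable (fun n : ℕ => r^n) := summable_geometric_of_lt_one hr0.le hr
  apply (h2.add ((h1.mul_left 4).add (h0.mul_left 4))).congr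
  intro n
  simp only [Nat.add_sub_cancel]
  push_cast
  ring

lemma GG_hasDerivAt {z : ℝ} (hz : |z| < 1) : HasDerivAt GG (HH z) z := by
  set r : ℝ := (1 + |z|)/2 with hr_def
  have hr0 : 0 < r := by positivity
  have hr1 : r < 1 := by rw [hr_def]; linarith
  have hzr : |z| < r := by rw [hr_def]; linarith
  have hmem : z ∈ Metric.ball (0:ℝ) r := by simpa [Metric.mem_ball, Real.dist_eq] using hzr
  have key : HasDerivAt (fun y => ∑' n : ℕ, ((n:ℝ)+1) * cc (n+1) * y ^ n)
      (∑' n : ℕ, ((n:ℝ)+1) * cc (n+1) * ((n:ℝ) * z ^ (n-1))) z := by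
    apply hasDerivAt_tsum_of_isPreconnected (summable_deriv_bound2 hr0 hr1)
      Metric.isOpen_ball (convex_ball (0:ℝ) r).isPreconnected
      (g := fun (n : ℕ) y => ((n:ℝ)+1) * cc (n+1) * y ^ n)
      (g' := fun (n : ℕ) y => ((n:ℝ)+1) * cc (n+1) * ((n:ℝ) * y ^ (n-1)))
      (fun n y _ => (hasDerivAt_pow n y).const_mul _) ?_ (Metric.mem_ball_self hr0)
      ?_ hmem
    · intro n y hy
      have hy' : |y| < r := by simpa [Metric.mem_ball, Real.dist_eq] using hy
      rw [Real.norm_eq_abs, abs_mul, abs_mul, abs_mul, abs_pow]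
      have hc := cc_abs (n+1)
      have hn1 : |(n:ℝ)+1| = (n:ℝ)+1 := abs_of_pos (by positivity)
      have hnn : |(n:ℝ)| = (n:ℝ) := abs_of_nonneg (by positivity)
      rw [hn1, hnn]
      have hyp : |y|^(n-1) ≤ r^(n-1) := pow_le_pow_left₀ (abs_nonneg y) hy'.le _
      have hnle : (n:ℝ) ≤ (n:ℝ)+1 := by linarith
      have h0 : (0:ℝ) ≤ (n:ℝ) := by positivity
      have hA : (↑n * |y|^(n-1)) ≤ (((n:ℝ)+1) * r^(n-1)) :=
        mul_le_mul hnle hyp (pow_nonneg (abs_nonneg y) _) (by positivity)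
      have hB : |cc (n+1)| * (↑n * |y|^(n-1)) ≤ 1 * (((n:ℝ)+1) * r^(n-1)) :=
        mul_le_mul hc hA (by positivity) (by norm_num)
      nlinarith [mul_le_mul_of_nonneg_left hB (by positivity : (0:ℝ) ≤ (n:ℝ)+1)]
    · apply (summable_GG (by simpa [abs_of_pos hr0] using hr1 : |(0:ℝ)| < 1)).congr
      intro n; rfl
  have heq : (∑' n : ℕ, ((n:ℝ)+1) * cc (n+1) * ((n:ℝ) * z ^ (n-1))) = HH z := by
    have hs : Summable (fun n : ℕ => ((n:ℝ)+1) * cc (n+1) * ((n:ℝ) * z ^ (n-1))) := by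
      rw [← summable_nat_add_iff 1]
      apply (summable_HH hz).congr
      intro n
      simp only [Nat.add_sub_cancel]
      push_cast
      ring
    rw [Summable.tsum_eq_zero_add hs]
    simp only [Nat.cast_zero, zero_mul, mul_zero, zero_add]
    rw [HH]
    apply tsum_congr
    intro n
    simp only [Nat.add_sub_cancel]
    push_cast
    ring
  rw [← heq]
  exact key

lemma FF_ode {z : ℝ} (hz : |z| < 1) :
    z * (1 - z) * HH z + (1 - 2*z) * GG z - (2/9) * FF z = 0 := by
  have hF : HasSum (fun n : ℕ => cc n * z^n) (FF z) := (summable_FF hz).hasSum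
  have hG : HasSum (fun n : ℕ => ((n:ℝ)+1) * cc (n+1) * z^n) (GG z) := (summable_GG hz).hasSum
  have hH : HasSum (fun n : ℕ => ((n:ℝ)+2) * ((n:ℝ)+1) * cc (n+2) * z^n) (HH z) :=
    (summable_HH hz).hasSum
  -- z * HH z  : coefficients (n+1) n cc(n+1)
  have h1 : HasSum (fun n : ℕ => (((n:ℝ)+1) * (n:ℝ) * cc (n+1)) * z^n) (z * HH z) := by
    have e : (fun n : ℕ => ((((n+1:ℕ)):ℝ)+1) * ((n+1:ℕ):ℝ) * cc ((n+1)+1) * z^(n+1))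
        = (fun n : ℕ => z * (((n:ℝ)+2) * ((n:ℝ)+1) * cc (n+2) * z^n)) := by
      funext n; push_cast; ring
    have step : HasSum (fun n : ℕ => (((((n+1:ℕ)):ℝ)+1) * (((n+1:ℕ)):ℝ) * cc ((n+1)+1)) * z^(n+1))
        (z * HH z) := by
      have := hH.mul_left z
      rw [← e] at this
      exact this
    have := (hasSum_nat_add_iff (f := fun n : ℕ => (((n:ℝ)+1) * (n:ℝ) * cc (n+1)) * z^n) 1).mp step
    simpa using this
  -- z^2 * HH z : coefficients n (n-1) cc n
  have h2 : HasSum (fun n : ℕ => ((n:ℝ) * ((n:ℝ)-1) * cc n) * z^n) (z^2 * HH z) := by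
    have e : (fun n : ℕ => (((n+2:ℕ)):ℝ) * ((((n+2:ℕ)):ℝ)-1) * cc (n+2) * z^(n+2))
        = (fun n : ℕ => z^2 * (((n:ℝ)+2) * ((n:ℝ)+1) * cc (n+2) * z^n)) := by
      funext n; push_cast; ring
    have step : HasSum (fun n : ℕ => ((((n+2:ℕ)):ℝ) * ((((n+2:ℕ)):ℝ)-1) * cc (n+2)) * z^(n+2))
        (z^2 * HH z) := by
      have := hH.mul_left (z^2)
      rw [← e] at this
      exact this
    have := (hasSum_nat_add_iff (f := fun n : ℕ => ((n:ℝ) * ((n:ℝ)-1) * cc n) * z^n) 2).mp step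
    simpa [Finset.sum_range_succ] using this
  -- z * GG z : coefficients n cc n
  have h4 : HasSum (fun n : ℕ => ((n:ℝ) * cc n) * z^n) (z * GG z) := by
    have e : (fun n : ℕ => (((n+1:ℕ)):ℝ) * cc (n+1) * z^(n+1))
        = (fun n : ℕ => z * (((n:ℝ)+1) * cc (n+1) * z^n)) := by
      funext n; push_cast; ring
    have step : HasSum (fun n : ℕ => ((((n+1:ℕ)):ℝ) * cc (n+1)) * z^(n+1)) (z * GG z) := by
      have := hG.mul_left z
      rw [← e] at this
      exact this
    have := (hasSum_nat_add_iff (f := fun n : ℕ => ((n:ℝ) * cc n) * z^n) 1).mp step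
    simpa using this
  -- combine
  have hbig : HasSum
      (fun n : ℕ => ((((n:ℝ)+1) * (n:ℝ) * cc (n+1)) - ((n:ℝ) * ((n:ℝ)-1) * cc n)
        + (((n:ℝ)+1) * cc (n+1)) - 2 * ((n:ℝ) * cc n) - (2/9) * cc n) * z^n)
      (z * HH z - z^2 * HH z + GG z - 2 * (z * GG z) - (2/9) * FF z) := by
    have := ((((h1.sub h2).add hG).sub (h4.mul_left 2)).sub (hF.mul_left (2/9)))
    exact this.congr_fun (fun n => by ring)
  have hcoef : (fun n : ℕ => ((((n:ℝ)+1) * (n:ℝ) * cc (n+1)) - ((n:ℝ) * ((n:ℝ)-1) * cc n)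
        + (((n:ℝ)+1) * cc (n+1)) - 2 * ((n:ℝ) * cc n) - (2/9) * cc n) * z^n)
      = (fun _ : ℕ => (0:ℝ)) := by
    funext n
    linear_combination ((z:ℝ)^n/9) * cc_rec n
  rw [hcoef] at hbig
  have hS := hbig.unique hasSum_zero
  linear_combination hS

lemma FF_zero : FF 0 = 1 := by
  rw [FF, tsum_eq_single 0 (fun n hn => by simp [zero_pow hn])]
  simp [cc_zero]

lemma FF_ge_one {z : ℝ} (h0 : 0 ≤ z) (h1 : z < 1) : 1 ≤ FF z := by
  have hs := summable_FF (z := z) (by rw [abs_of_nonneg h0]; exact h1)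
  have := Summable.le_tsum hs 0 (fun n _ => by have := (cc_pos n).le; positivity)
  simpa [cc_zero, FF] using this

lemma FF_le_inv {z : ℝ} (h0 : 0 ≤ z) (h1 : z < 1) : FF z ≤ (1-z)⁻¹ := by
  have hs := summable_FF (z := z) (by rw [abs_of_nonneg h0]; exact h1)
  have hg : Summable (fun n : ℕ => z^n) := summable_geometric_of_lt_one h0 h1
  have hle : FF z ≤ ∑' n : ℕ, z^n := by
    apply Summable.tsum_le_tsum _ hs hg
    intro n
    have := cc_le_one n
    have hzn : (0:ℝ) ≤ z^n := by positivity
    nlinarith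
  rwa [tsum_geometric_of_lt_one h0 h1] at hle

noncomputable def ph (t : ℝ) : ℝ := 1 - ((1-t)/(1+2*t))^3
noncomputable def phd (t : ℝ) : ℝ := 9*(1-t)^2/(1+2*t)^4
noncomputable def phdd (t : ℝ) : ℝ := -18*(1-t)*(5-2*t)/(1+2*t)^5
noncomputable def w1 (t : ℝ) : ℝ := (1+2*t) * FF (t^3)
noncomputable def w1d (t : ℝ) : ℝ := 2 * FF (t^3) + (1+2*t) * (3*t^2) * GG (t^3)
noncomputable def w1dd (t : ℝ) : ℝ :=
  12*t^2 * GG (t^3) + 6*t*(1+2*t) * GG (t^3) + 9*t^4*(1+2*t) * HH (t^3)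
noncomputable def w2 (t : ℝ) : ℝ := FF (ph t)
noncomputable def w2d (t : ℝ) : ℝ := GG (ph t) * phd t
noncomputable def w2dd (t : ℝ) : ℝ := HH (ph t) * (phd t)^2 + GG (ph t) * phdd t
noncomputable def rho (t : ℝ) : ℝ := t*(1-t^3)/(1+2*t)^2
noncomputable def rhod (t : ℝ) : ℝ := (1 - 2*t - 4*t^3 - 4*t^4)/(1+2*t)^3
noncomputable def VV (t : ℝ) : ℝ := (w2d t * w1 t - w2 t * w1d t) * rho t

lemma ph_hasDerivAt {t : ℝ} (h12 : 1+2*t ≠ 0) : HasDerivAt ph (phd t) t := by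
  have hu : HasDerivAt (fun t : ℝ => 1-t) (-1) t := by
    simpa using (hasDerivAt_id t).const_sub 1
  have hv : HasDerivAt (fun t : ℝ => 1+2*t) 2 t := by
    simpa using ((hasDerivAt_id t).const_mul 2).const_add 1
  have hq := hu.div hv h12
  have hp := hq.pow 3
  have := hp.const_sub 1
  refine this.congr_deriv ?_
  rw [phd]
  norm_num only [Pi.div_apply]
  field_simp
  ring

lemma phd_hasDerivAt {t : ℝ} (h12 : 1+2*t ≠ 0) : HasDerivAt phd (phdd t) t := by
  have hu : HasDerivAt (fun t : ℝ => 9*(1-t)^2) (-18*(1-t)) t := by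
    have h1 : HasDerivAt (fun t : ℝ => 1-t) (-1) t := by
      simpa using (hasDerivAt_id t).const_sub 1
    have := (h1.pow 2).const_mul 9
    refine this.congr_deriv ?_
    all_goals (push_cast; ring)
  have hv : HasDerivAt (fun t : ℝ => (1+2*t)^4) (4*(1+2*t)^3*2) t := by
    have h1 : HasDerivAt (fun t : ℝ => 1+2*t) 2 t := by
      simpa using ((hasDerivAt_id t).const_mul 2).const_add 1
    have := h1.pow 4
    refine this.congr_deriv ?_
    all_goals (push_cast; ring)
  have h4 : (1+2*t)^4 ≠ 0 := pow_ne_zero _ h12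
  have := hu.div hv h4
  refine this.congr_deriv ?_
  rw [phdd]
  field_simp
  ring

lemma cube_hasDerivAt (t : ℝ) : HasDerivAt (fun t : ℝ => t^3) (3*t^2) t := by
  have := hasDerivAt_pow 3 t
  refine this.congr_deriv ?_
  all_goals norm_num

lemma w1_hasDerivAt {t : ℝ} (ht3 : |t^3| < 1) : HasDerivAt w1 (w1d t) t := by
  have hFc : HasDerivAt (fun t : ℝ => FF (t^3)) (GG (t^3) * (3*t^2)) t :=
    by
    have h := HasDerivAt.comp_of_eq t (FF_hasDerivAt ht3) (cube_hasDerivAt t) rfl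
    exact h
  have hv : HasDerivAt (fun t : ℝ => 1+2*t) 2 t := by
    simpa using ((hasDerivAt_id t).const_mul 2).const_add 1
  have := hv.mul hFc
  refine this.congr_deriv ?_
  rw [w1d]
  ring

lemma w1d_hasDerivAt {t : ℝ} (ht3 : |t^3| < 1) : HasDerivAt w1d (w1dd t) t := by
  have hFc : HasDerivAt (fun t : ℝ => FF (t^3)) (GG (t^3) * (3*t^2)) t :=
    by
    have h := HasDerivAt.comp_of_eq t (FF_hasDerivAt ht3) (cube_hasDerivAt t) rfl
    exact h
  have hGc : HasDerivAt (fun t : ℝ => GG (t^3)) (HH (t^3) * (3*t^2)) t :=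
    by
    have h := HasDerivAt.comp_of_eq t (GG_hasDerivAt ht3) (cube_hasDerivAt t) rfl
    exact h
  have hpoly : HasDerivAt (fun t : ℝ => (1+2*t) * (3*t^2)) (2*(3*t^2) + (1+2*t)*(6*t)) t := by
    have hv : HasDerivAt (fun t : ℝ => 1+2*t) 2 t := by
      simpa using ((hasDerivAt_id t).const_mul 2).const_add 1
    have hsq : HasDerivAt (fun t : ℝ => 3*t^2) (6*t) t := by
      have := (hasDerivAt_pow 2 t).const_mul 3
      refine this.congr_deriv ?_
      push_cast
      ring
    exact hv.mul hsq
  have := (hFc.const_mul 2).add (hpoly.mul hGc)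
  refine this.congr_deriv ?_
  rw [w1dd]
  ring

lemma w2_hasDerivAt {t : ℝ} (hph : |ph t| < 1) (h12 : 1+2*t ≠ 0) :
    HasDerivAt w2 (w2d t) t := by
  have h := HasDerivAt.comp_of_eq t (FF_hasDerivAt hph) (ph_hasDerivAt h12) rfl
  exact h

lemma w2d_hasDerivAt {t : ℝ} (hph : |ph t| < 1) (h12 : 1+2*t ≠ 0) :
    HasDerivAt w2d (w2dd t) t := by
  have hGc : HasDerivAt (fun t : ℝ => GG (ph t)) (HH (ph t) * phd t) t := by
    have h := HasDerivAt.comp_of_eq t (GG_hasDerivAt hph) (ph_hasDerivAt h12) rfl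
    exact h
  have := hGc.mul (phd_hasDerivAt h12)
  refine this.congr_deriv ?_
  rw [w2dd]
  ring

lemma rho_hasDerivAt {t : ℝ} (h12 : 1+2*t ≠ 0) : HasDerivAt rho (rhod t) t := by
  have hu : HasDerivAt (fun t : ℝ => t*(1-t^3)) (1*(1-t^3) + t*(-(3*t^2))) t := by
    have h1 : HasDerivAt (fun t : ℝ => 1-t^3) (-(3*t^2)) t := (cube_hasDerivAt t).const_sub 1
    exact (hasDerivAt_id t).mul h1
  have hv : HasDerivAt (fun t : ℝ => (1+2*t)^2) (2*(1+2*t)*2) t := by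
    have h1 : HasDerivAt (fun t : ℝ => 1+2*t) 2 t := by
      simpa using ((hasDerivAt_id t).const_mul 2).const_add 1
    have := h1.pow 2
    refine this.congr_deriv ?_
    all_goals (push_cast; ring)
  have h2 : (1+2*t)^2 ≠ 0 := pow_ne_zero _ h12
  have := hu.div hv h2
  refine this.congr_deriv ?_
  rw [rhod]
  field_simp
  ring

lemma VV_hasDerivAt {t : ℝ} (ht3 : |t^3| < 1) (hph : |ph t| < 1) (h12 : 1+2*t ≠ 0) :
    HasDerivAt VV ((w2dd t * w1 t - w2 t * w1dd t) * rho t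
      + (w2d t * w1 t - w2 t * w1d t) * rhod t) t := by
  have hW : HasDerivAt (fun t => w2d t * w1 t - w2 t * w1d t)
      (w2dd t * w1 t - w2 t * w1dd t) t := by
    have h1 := (w2d_hasDerivAt hph h12).mul (w1_hasDerivAt ht3)
    have h2 := (w2_hasDerivAt hph h12).mul (w1d_hasDerivAt ht3)
    have := h1.sub h2
    refine this.congr_deriv ?_
    ring
  exact hW.mul (rho_hasDerivAt h12)

lemma ph_bounds {t : ℝ} (ht0 : 0 < t) (ht1 : t < 1) : 0 < ph t ∧ ph t < 1 := by
  have h12 : (0:ℝ) < 1+2*t := by linarith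
  have hu0 : 0 < (1-t)/(1+2*t) := div_pos (by linarith) h12
  have hu1 : (1-t)/(1+2*t) < 1 := by
    rw [div_lt_one h12]; linarith
  constructor
  · rw [ph]; nlinarith [pow_lt_one₀ hu0.le hu1 (three_ne_zero)]
  · rw [ph]; nlinarith [pow_pos hu0 3]

set_option maxHeartbeats 4000000 in
lemma key_identity {t : ℝ} (ht0 : 0 < t) (ht1 : t < 1) :
    (w2dd t * w1 t - w2 t * w1dd t) * rho t
      + (w2d t * w1 t - w2 t * w1d t) * rhod t = 0 := by
  have h12 : (1:ℝ)+2*t ≠ 0 := by positivity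
  have ht3lt : t^3 < 1 := pow_lt_one₀ ht0.le ht1 (by norm_num)
  have ht3 : |t^3| < 1 := by
    rw [abs_of_pos (by positivity)]
    exact ht3lt
  obtain ⟨hph0, hph1⟩ := ph_bounds ht0 ht1
  have hode1 := FF_ode (z := t^3) ht3
  have hode2 := FF_ode (z := ph t) (by rw [abs_of_pos hph0]; exact hph1)
  have htne : t ≠ 0 := ht0.ne'
  have h1t : (1:ℝ)-t ≠ 0 := by
    have : (0:ℝ) < 1-t := by linarith
    positivity
  have h1t3 : (1:ℝ)-t^3 ≠ 0 := by
    have : (0:ℝ) < 1-t^3 := by linarith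
    positivity
  have hsq : (1:ℝ)+t+t^2 ≠ 0 := by positivity
  have ht3ne : t^3*(1-t^3) ≠ 0 := by
    have h1 : (0:ℝ) < t^3 := by positivity
    have h2 : (0:ℝ) < 1-t^3 := by linarith
    positivity
  set A := FF (t^3) with hAdef
  set B := GG (t^3) with hBdef
  set D := FF (ph t) with hDdef
  set E := GG (ph t) with hEdef
  have hC : HH (t^3) = ((2/9)*A - (1-2*t^3)*B)/(t^3*(1-t^3)) := by
    rw [eq_div_iff ht3ne]
    linear_combination hode1
  have hden : (9*t*(1+t+t^2)*(1-t)^3 : ℝ) ≠ 0 := by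
    apply mul_ne_zero (mul_ne_zero (mul_ne_zero (by norm_num) htne) hsq)
    exact pow_ne_zero _ h1t
  have h6 : ((1+2*t)^6) * (ph t * (1 - ph t) * HH (ph t) + (1 - 2*ph t) * GG (ph t)
        - 2/9 * FF (ph t))
      = 9*t*(1+t+t^2)*(1-t)^3 * HH (ph t)
        + (1-12*t-6*t^2-10*t^3)*(1+2*t)^3 * E - (2/9)*(1+2*t)^6 * D := by
    rw [hDdef, hEdef]
    simp only [ph]
    field_simp
    ring
  have hode2c : 9*t*(1+t+t^2)*(1-t)^3 * HH (ph t)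
      + (1-12*t-6*t^2-10*t^3)*(1+2*t)^3 * E - (2/9)*(1+2*t)^6 * D = 0 := by
    linear_combination ((1+2*t)^6) * hode2 - h6
  have hK : HH (ph t) = ((2/9)*(1+2*t)^6 * D - (1-12*t-6*t^2-10*t^3)*(1+2*t)^3 * E)
      / (9*t*(1+t+t^2)*(1-t)^3) := by
    rw [eq_div_iff hden]
    linear_combination hode2c
  simp only [w1, w1d, w1dd, w2, w2d, w2dd, rho, rhod, phd, phdd]
  rw [hC, hK]
  rw [← hAdef, ← hBdef, ← hDdef, ← hEdef]
  field_simp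
  ring

open Set Filter in
lemma const_on_Ioo {f : ℝ → ℝ} (hf : ∀ t ∈ Set.Ioo (0:ℝ) 1, HasDerivAt f 0 t) :
    ∀ x ∈ Set.Ioo (0:ℝ) 1, ∀ y ∈ Set.Ioo (0:ℝ) 1, f x = f y := by
  have main : ∀ x ∈ Set.Ioo (0:ℝ) 1, ∀ y ∈ Set.Ioo (0:ℝ) 1, x < y → f x = f y := by
    intro x hx y hy hxy
    have hsub : Set.Icc x y ⊆ Set.Ioo (0:ℝ) 1 := fun z hz =>
      ⟨lt_of_lt_of_le hx.1 hz.1, lt_of_le_of_lt hz.2 hy.2⟩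
    have hcont : ContinuousOn f (Set.Icc x y) := fun z hz =>
      (hf z (hsub hz)).continuousAt.continuousWithinAt
    have hderiv : ∀ z ∈ Set.Ioo x y, HasDerivAt f 0 z := fun z hz =>
      hf z (hsub ⟨hz.1.le, hz.2.le⟩)
    obtain ⟨c, _, hceq⟩ := exists_hasDerivAt_eq_slope f (fun _ => (0:ℝ)) hxy hcont hderiv
    have := hceq.symm
    rw [div_eq_zero_iff] at this
    rcases this with h | h
    · linarith
    · linarith
  intro x hx y hy
  rcases lt_trichotomy x y with h | h | h
  · exact main x hx y hy h
  · rw [h]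
  · exact (main y hy x hx h).symm

open Set Filter in
lemma eq_value_at_zero {f : ℝ → ℝ}
    (hconst : ∀ x ∈ Set.Ioo (0:ℝ) 1, ∀ y ∈ Set.Ioo (0:ℝ) 1, f x = f y)
    (hcont : ContinuousAt f 0) {x : ℝ} (hx : x ∈ Set.Ioo (0:ℝ) 1) : f x = f 0 := by
  have h1 : Tendsto f (nhdsWithin 0 (Set.Ioi (0:ℝ))) (nhds (f 0)) :=
    hcont.continuousWithinAt
  have hmem : Set.Ioo (0:ℝ) 1 ∈ nhdsWithin 0 (Set.Ioi (0:ℝ)) :=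
    Ioo_mem_nhdsGT_of_mem ⟨le_refl 0, zero_lt_one⟩
  have h2 : Tendsto f (nhdsWithin 0 (Set.Ioi (0:ℝ))) (nhds (f x)) := by
    apply Tendsto.congr' _ tendsto_const_nhds
    filter_upwards [hmem] with y hy
    exact hconst x hx y hy
  exact tendsto_nhds_unique h2 h1

lemma ph_zero : ph 0 = 0 := by norm_num [ph]

lemma W_zero {t : ℝ} (ht : t ∈ Set.Ioo (0:ℝ) 1) :
    w2d t * w1 t - w2 t * w1d t = 0 := by
  have hVd : ∀ s ∈ Set.Ioo (0:ℝ) 1, HasDerivAt VV 0 s := by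
    intro s hs
    have h12 : (1:ℝ)+2*s ≠ 0 := by have := hs.1; positivity
    have hs3 : |s^3| < 1 := by
      rw [abs_of_pos (by have := hs.1; positivity)]
      exact pow_lt_one₀ hs.1.le hs.2 (by norm_num)
    obtain ⟨h1, h2⟩ := ph_bounds hs.1 hs.2
    have hph : |ph s| < 1 := by rw [abs_of_pos h1]; exact h2
    have := VV_hasDerivAt hs3 hph h12
    rwa [key_identity hs.1 hs.2] at this
  have hconst := const_on_Ioo hVd
  have hc0 : ContinuousAt VV 0 := by
    have h12 : (1:ℝ)+2*(0:ℝ) ≠ 0 := by norm_num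
    have hs3 : |(0:ℝ)^3| < 1 := by norm_num
    have hph : |ph 0| < 1 := by rw [ph_zero]; norm_num
    exact (VV_hasDerivAt hs3 hph h12).continuousAt
  have hVt := eq_value_at_zero hconst hc0 ht
  have hV0 : VV 0 = 0 := by
    rw [VV, rho]
    norm_num
  rw [hV0] at hVt
  have hrho : rho t ≠ 0 := by
    rw [rho]
    have h1 : (0:ℝ) < t := ht.1
    have h2 : t^3 < 1 := pow_lt_one₀ ht.1.le ht.2 (by norm_num)
    have h3 : (0:ℝ) < 1-t^3 := by linarith
    have h4 : (0:ℝ) < 1+2*t := by linarith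
    positivity
  rw [VV] at hVt
  exact (mul_eq_zero.mp hVt).resolve_right hrho

lemma w1_pos {t : ℝ} (ht0 : 0 ≤ t) (ht1 : t < 1) : 0 < w1 t := by
  rw [w1]
  have h1 : (0:ℝ) < 1+2*t := by linarith
  have h2 : 0 ≤ t^3 := by positivity
  have h3 : t^3 < 1 := by
    rcases eq_or_lt_of_le ht0 with h | h
    · rw [← h]; norm_num
    · exact pow_lt_one₀ ht0 ht1 (by norm_num)
  nlinarith [FF_ge_one h2 h3]

lemma FF_transformation {t : ℝ} (ht0 : 0 < t) (ht1 : t < 1) :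
    FF (1 - ((1-t)/(1+2*t))^3) = (1+2*t) * FF (t^3) := by
  have hQd : ∀ s ∈ Set.Ioo (0:ℝ) 1, HasDerivAt (fun z => w2 z / w1 z) 0 s := by
    intro s hs
    have h12 : (1:ℝ)+2*s ≠ 0 := by have := hs.1; positivity
    have hs3 : |s^3| < 1 := by
      rw [abs_of_pos (by have := hs.1; positivity)]
      exact pow_lt_one₀ hs.1.le hs.2 (by norm_num)
    obtain ⟨h1, h2⟩ := ph_bounds hs.1 hs.2
    have hph : |ph s| < 1 := by rw [abs_of_pos h1]; exact h2
    have hw1ne : w1 s ≠ 0 := (w1_pos hs.1.le hs.2).ne'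
    have hdiv := (w2_hasDerivAt hph h12).div (w1_hasDerivAt hs3) hw1ne
    have hzero : (w2d s * w1 s - w2 s * w1d s) / (w1 s)^2 = 0 := by
      rw [W_zero hs, zero_div]
    rwa [hzero] at hdiv
  have hconst := const_on_Ioo hQd
  have hc0 : ContinuousAt (fun z => w2 z / w1 z) 0 := by
    have h12 : (1:ℝ)+2*(0:ℝ) ≠ 0 := by norm_num
    have hs3 : |(0:ℝ)^3| < 1 := by norm_num
    have hph : |ph 0| < 1 := by rw [ph_zero]; norm_num
    have hw2 := (w2_hasDerivAt hph h12).continuousAt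
    have hw1 := (w1_hasDerivAt hs3).continuousAt
    exact hw2.div hw1 (w1_pos le_rfl zero_lt_one).ne'
  have ht : t ∈ Set.Ioo (0:ℝ) 1 := ⟨ht0, ht1⟩
  have hQt := eq_value_at_zero hconst hc0 ht
  have hQ0 : w2 0 / w1 0 = 1 := by
    rw [w2, w1, ph_zero]
    norm_num [FF_zero]
  rw [hQ0] at hQt
  have hw1ne : w1 t ≠ 0 := (w1_pos ht0.le ht1).ne'
  have : w2 t = w1 t := by
    field_simp at hQt
    exact hQt
  rw [w2, w1, ph] at this
  exact this

lemma hyp_eq_FF (z : ℝ) : hyp2F1 (1/3) (2/3) 1 z = FF z := rfl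

theorem borwein_cubic_agm_hypergeometric (k : ℝ) (hk0 : 0 < k) (hk1 : k ≤ 1)
    (a b : ℕ → ℝ) (ha0 : a 0 = 1) (hb0 : b 0 = k)
    (ha : ∀ n, a (n + 1) = (a n + 2 * b n) / 3)
    (hb : ∀ n, b (n + 1) = (b n * (a n ^ 2 + a n * b n + b n ^ 2) / 3) ^ ((1:ℝ)/3))
    (M : ℝ)
    (haM : Filter.Tendsto a Filter.atTop (nhds M))
    (hbM : Filter.Tendsto b Filter.atTop (nhds M)) :
    M = 1 / hyp2F1 (1/3) (2/3) 1 (1 - k^3) := by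
  rw [hyp_eq_FF]
  rcases eq_or_lt_of_le hk1 with hkeq | hklt
  · -- k = 1 : constant sequences
    have hall : ∀ n, a n = 1 ∧ b n = 1 := by
      intro n
      induction n with
      | zero => exact ⟨ha0, by rw [hb0, ← hkeq]⟩
      | succ n ih =>
        obtain ⟨h1, h2⟩ := ih
        constructor
        · rw [ha, h1, h2]; norm_num
        · rw [hb, h1, h2]
          norm_num
    have hM1 : M = 1 := by
      have : Filter.Tendsto a Filter.atTop (nhds 1) := by
        have : a = fun _ => 1 := funext fun n => (hall n).1
        rw [this]
        exact tendsto_const_nhds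
      exact tendsto_nhds_unique haM this
    rw [hM1, hkeq]
    norm_num [FF_zero]
  · -- 0 < k < 1
    have hpos : ∀ n, 0 < b n ∧ b n < a n := by
      intro n
      induction n with
      | zero => rw [ha0, hb0]; exact ⟨hk0, hklt⟩
      | succ n ih =>
        obtain ⟨hbp, hba⟩ := ih
        have hap : 0 < a n := hbp.trans hba
        have hX : 0 < b n * (a n^2 + a n * b n + b n^2)/3 := by
          have : 0 < a n^2 + a n * b n + b n^2 := by positivity
          positivity
        have hbp' : 0 < b (n+1) := by
          rw [hb]; exact Real.rpow_pos_of_pos hX _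
        have hcube : b (n+1)^3 = b n * (a n^2 + a n * b n + b n^2)/3 := by
          rw [hb, ← Real.rpow_natCast ((b n * (a n^2 + a n*b n + b n^2)/3) ^ ((1:ℝ)/3)) 3,
            ← Real.rpow_mul hX.le]
          norm_num
        have hap' : 0 < a (n+1) := by rw [ha]; linarith
        refine ⟨hbp', ?_⟩
        have hlt3 : b (n+1)^3 < a (n+1)^3 := by
          rw [hcube, ha]
          nlinarith [pow_pos (show (0:ℝ) < a n - b n by linarith) 3]
        exact lt_of_pow_lt_pow_left₀ 3 hap'.le hlt3
    have hcube : ∀ n, b (n+1)^3 = b n * (a n^2 + a n * b n + b n^2)/3 := by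
      intro n
      obtain ⟨hbp, hba⟩ := hpos n
      have hap : 0 < a n := hbp.trans hba
      have hX : 0 < b n * (a n^2 + a n * b n + b n^2)/3 := by
        have : 0 < a n^2 + a n * b n + b n^2 := by positivity
        positivity
      rw [hb, ← Real.rpow_natCast ((b n * (a n^2 + a n*b n + b n^2)/3) ^ ((1:ℝ)/3)) 3,
        ← Real.rpow_mul hX.le]
      norm_num
    have hbk : ∀ n, k ≤ b n := by
      intro n
      induction n with
      | zero => rw [hb0]
      | succ n ih =>
        obtain ⟨hbp, hba⟩ := hpos n
        have hap : 0 < a n := hbp.trans hba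
        have hle3 : b n^3 ≤ b (n+1)^3 := by
          rw [hcube n]
          nlinarith [mul_nonneg (mul_nonneg hbp.le (sub_pos.2 hba).le)
            (by linarith : (0:ℝ) ≤ a n + 2*b n)]
        have := le_of_pow_le_pow_left₀ (by norm_num) (hpos (n+1)).1.le hle3
        linarith
    have hM0 : 0 < M :=
      lt_of_lt_of_le hk0 (ge_of_tendsto hbM (Filter.Eventually.of_forall hbk))
    -- invariant
    have hk3le : k^3 ≤ 1 := pow_le_one₀ hk0.le hk1
    have hk3pos : 0 < k^3 := by positivity
    have hFk_pos : 0 < FF (1 - k^3) := by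
      have h1 : 0 ≤ 1 - k^3 := by linarith
      have h2 : 1 - k^3 < 1 := by linarith
      linarith [FF_ge_one h1 h2]
    have hInv : ∀ n, FF (1 - (b n / a n)^3) = FF (1 - k^3) * a n := by
      intro n
      induction n with
      | zero => rw [ha0, hb0]; norm_num
      | succ n ih =>
        obtain ⟨hbp, hba⟩ := hpos n
        have hap : 0 < a n := hbp.trans hba
        set s := b n / a n with hs_def
        have hs0 : 0 < s := div_pos hbp hap
        have hs1 : s < 1 := (div_lt_one hap).mpr hba
        set tt := (1 - s)/(1 + 2*s) with htt_def
        have h12s : (0:ℝ) < 1 + 2*s := by linarith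
        have htt0 : 0 < tt := div_pos (by linarith) h12s
        have htt1 : tt < 1 := by
          rw [htt_def, div_lt_one h12s]; linarith
        have htrans := FF_transformation htt0 htt1
        have h12t : (0:ℝ) < 1 + 2*tt := by linarith
        -- (1 - tt)/(1 + 2 tt) = s
        have hback : (1 - tt)/(1 + 2*tt) = s := by
          rw [htt_def]
          field_simp
          ring
        -- 1 + 2 tt = 3/(1+2s)
        have h2tt : 1 + 2*tt = 3/(1 + 2*s) := by
          rw [htt_def]; field_simp; ring
        -- tt^3 = 1 - (b(n+1)/a(n+1))^3
        have hap' : 0 < a (n+1) := by rw [ha]; linarith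
        have httc : tt^3 = 1 - (b (n+1) / a (n+1))^3 := by
          rw [htt_def, div_pow, div_pow, hcube n, ha, hs_def]
          rw [div_pow]
          field_simp
          ring
        rw [hback] at htrans
        -- htrans : FF (1 - s^3) = (1+2tt) * FF (tt^3)
        have hres : FF (1 - (b (n+1) / a (n+1))^3)
            = FF (1 - s^3) * (1 + 2*s) / 3 := by
          rw [← httc]
          rw [htrans, h2tt]
          field_simp
        rw [hres, hs_def, ih, ha]
        field_simp
    -- limits
    have hs_tend : Filter.Tendsto (fun n => b n / a n) Filter.atTop (nhds 1) := by
      have := hbM.div haM hM0.ne'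
      rwa [div_self hM0.ne'] at this
    have hinv_tend : Filter.Tendsto (fun n => ((b n / a n)^3)⁻¹) Filter.atTop (nhds 1) := by
      have h1 := (hs_tend.pow 3).inv₀ (by norm_num)
      simpa using h1
    have hF_tend : Filter.Tendsto (fun n => FF (1 - (b n / a n)^3)) Filter.atTop (nhds 1) := by
      apply tendsto_of_tendsto_of_tendsto_of_le_of_le tendsto_const_nhds hinv_tend
      · intro n
        obtain ⟨hbp, hba⟩ := hpos n
        have hap : 0 < a n := hbp.trans hba
        have hs0 : 0 < b n / a n := div_pos hbp hap
        have hs1 : b n / a n < 1 := (div_lt_one hap).mpr hba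
        have hsc : (b n / a n)^3 ≤ 1 := pow_le_one₀ hs0.le hs1.le
        have hsp : 0 < (b n / a n)^3 := by positivity
        have h1 : 0 ≤ 1 - (b n / a n)^3 := by linarith
        have h2 : 1 - (b n / a n)^3 < 1 := by linarith
        exact FF_ge_one h1 h2
      · intro n
        obtain ⟨hbp, hba⟩ := hpos n
        have hap : 0 < a n := hbp.trans hba
        have hs0 : 0 < b n / a n := div_pos hbp hap
        have hs1 : b n / a n < 1 := (div_lt_one hap).mpr hba
        have hsc : (b n / a n)^3 ≤ 1 := pow_le_one₀ hs0.le hs1.le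
        have hsp : 0 < (b n / a n)^3 := by positivity
        have h1 : 0 ≤ 1 - (b n / a n)^3 := by linarith
        have h2 : 1 - (b n / a n)^3 < 1 := by linarith
        have := FF_le_inv h1 h2
        have heq : 1 - (1 - (b n / a n)^3) = (b n / a n)^3 := by ring
        rwa [heq] at this
    have hF_tend2 : Filter.Tendsto (fun n => FF (1 - k^3) * a n) Filter.atTop
        (nhds (FF (1 - k^3) * M)) := haM.const_mul _
    have hF_tend3 : Filter.Tendsto (fun n => FF (1 - k^3) * a n) Filter.atTop (nhds 1) := by
      apply hF_tend.congr
      intro n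
      exact hInv n
    have hfinal : FF (1 - k^3) * M = 1 := tendsto_nhds_unique hF_tend2 hF_tend3
    field_simp
    linarith [hfinal]
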